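/- Let $E$ be a real normed vector space, $\Omega \subset E$ open, $\hat{x} \in \Omega$, $r > 0$, and $(f_n)$ a sequence of real-valued functions on $\Omega$, each Lipschitz on $B(\hat{x},r) \cap \Omega$. Suppose there is a function $f_\infty$ Lipschitz on $B(\hat{x},r) \cap \Omega$ with $f_\infty(\hat{x}) = \lim_n f_n(\hat{x})$ and $\|f_n - f_\infty\|_{\hat{x},r} \to 0$, where $\|h\|_{\hat{x},r}$ denotes the Lipschitz seminorm of $h$ on $B(\hat{x},r) \cap \Omega$. Then for every $u \in E$, $D^+ f_\infty(\hat{x})(u) = \lim_{k \to \infty} D^+ f_k(\hat{x})(u)$. -/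

import Mathlib

open Filter Topology

/-- Upper Dini derivative of `f` at `x` in direction `u`. -/
noncomputable def dini {E : Type*} [NormedAddCommGroup E] [NormedSpace ℝ E]
    (f : E → ℝ) (x u : E) : ℝ :=
  Filter.limsup (fun t : ℝ => (f (x + t • u) - f x) / t) (𝓝[>] (0 : ℝ))

lemma limsup_abs_sub_le {l : Filter ℝ} [l.NeBot] {g h : ℝ → ℝ} {B c : ℝ}
    (hg : ∀ᶠ t in l, |g t| ≤ B) (hh : ∀ᶠ t in l, |h t| ≤ B)
    (hgh : ∀ᶠ t in l, |g t - h t| ≤ c) :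
    |limsup g l - limsup h l| ≤ c := by
  have bdg : IsBoundedUnder (· ≤ ·) l g := ⟨B, hg.mono fun t ht => (abs_le.1 ht).2⟩
  have bdg' : IsBoundedUnder (· ≥ ·) l g := ⟨-B, hg.mono fun t ht => (abs_le.1 ht).1⟩
  have bdh : IsBoundedUnder (· ≤ ·) l h := ⟨B, hh.mono fun t ht => (abs_le.1 ht).2⟩
  have bdh' : IsBoundedUnder (· ≥ ·) l h := ⟨-B, hh.mono fun t ht => (abs_le.1 ht).1⟩
  have cbg := bdg'.isCoboundedUnder_le
  have cbh := bdh'.isCoboundedUnder_le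
  have bdhc : IsBoundedUnder (· ≤ ·) l (fun t => h t + c) :=
    ⟨B + c, eventually_map.2 (hh.mono fun t ht => (by linarith [(abs_le.1 ht).2] : h t + c ≤ B + c))⟩
  have bdgc : IsBoundedUnder (· ≤ ·) l (fun t => g t + c) :=
    ⟨B + c, eventually_map.2 (hg.mono fun t ht => (by linarith [(abs_le.1 ht).2] : g t + c ≤ B + c))⟩
  have h1 : limsup g l ≤ limsup h l + c := by
    have := limsup_le_limsup (f := l) (u := g) (v := fun t => h t + c)
      (hgh.mono fun t ht => by have := (abs_le.1 ht).2; show g t ≤ h t + c; linarith)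
      cbg bdhc
    rwa [limsup_add_const l h c bdh cbh] at this
  have h2 : limsup h l ≤ limsup g l + c := by
    have := limsup_le_limsup (f := l) (u := h) (v := fun t => g t + c)
      (hgh.mono fun t ht => by have := (abs_le.1 ht).1; show h t ≤ g t + c; linarith)
      cbh bdgc
    rwa [limsup_add_const l g c bdg cbg] at this
  rw [abs_le]
  constructor <;> linarith

theorem stmt_6 {E : Type*} [NormedAddCommGroup E] [NormedSpace ℝ E]
    (Ω : Set E) (hΩ : IsOpen Ω) (xh : E) (hxh : xh ∈ Ω) (r : ℝ) (hr : 0 < r)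
    (f : ℕ → E → ℝ) (finf : E → ℝ)
    -- each `f n` is Lipschitz on `B(xh,r) ∩ Ω`
    (hlip : ∀ n, ∃ K : ℝ, ∀ y ∈ Metric.ball xh r ∩ Ω, ∀ z ∈ Metric.ball xh r ∩ Ω,
      |f n y - f n z| ≤ K * ‖y - z‖)
    -- `finf` is Lipschitz on `B(xh,r) ∩ Ω`
    (hlipinf : ∃ K : ℝ, ∀ y ∈ Metric.ball xh r ∩ Ω, ∀ z ∈ Metric.ball xh r ∩ Ω,
      |finf y - finf z| ≤ K * ‖y - z‖)
    -- `finf xh = lim f n xh`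
    (hval : Tendsto (fun n => f n xh) atTop (𝓝 (finf xh)))
    -- the Lipschitz seminorm of `f n - finf` on `B(xh,r) ∩ Ω` tends to 0
    (hsem : ∀ ε > 0, ∃ N : ℕ, ∀ n ≥ N,
      ∀ y ∈ Metric.ball xh r ∩ Ω, ∀ z ∈ Metric.ball xh r ∩ Ω,
        |(f n y - finf y) - (f n z - finf z)| ≤ ε * ‖y - z‖) :
    ∀ u : E, Tendsto (fun k => dini (f k) xh u) atTop (𝓝 (dini finf xh u)) := by
  intro u
  obtain ⟨ρ, hρ, hball⟩ := Metric.isOpen_iff.1 hΩ xh hxh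
  set δ : ℝ := min r ρ / (‖u‖ + 1) with hδdef
  have hu1 : (0:ℝ) < ‖u‖ + 1 := by positivity
  have hδ : 0 < δ := div_pos (lt_min hr hρ) hu1
  -- membership
  have hmem : ∀ t ∈ Set.Ioo (0:ℝ) δ, xh + t • u ∈ Metric.ball xh r ∩ Ω := by
    intro t ht
    have hdist : dist (xh + t • u) xh < min r ρ := by
      rw [dist_eq_norm, add_sub_cancel_left, norm_smul, Real.norm_eq_abs,
        abs_of_pos ht.1]
      calc t * ‖u‖ ≤ t * (‖u‖ + 1) := by nlinarith [ht.1]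
        _ < δ * (‖u‖ + 1) := by nlinarith [ht.2, ht.1]
        _ = min r ρ := by rw [hδdef]; field_simp
    exact ⟨Metric.mem_ball.2 (hdist.trans_le (min_le_left _ _)),
      hball (Metric.mem_ball.2 (hdist.trans_le (min_le_right _ _)))⟩
  have hxmem : xh ∈ Metric.ball xh r ∩ Ω := ⟨Metric.mem_ball_self hr, hxh⟩
  have hIoo : Set.Ioo (0:ℝ) δ ∈ 𝓝[>] (0:ℝ) := Ioo_mem_nhdsGT_of_mem ⟨le_refl 0, hδ⟩
  -- quotient bound from a Lipschitz constant
  have hquot : ∀ (h : E → ℝ) (K : ℝ),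
      (∀ y ∈ Metric.ball xh r ∩ Ω, ∀ z ∈ Metric.ball xh r ∩ Ω,
        |h y - h z| ≤ K * ‖y - z‖) →
      ∀ t ∈ Set.Ioo (0:ℝ) δ, |(h (xh + t • u) - h xh) / t| ≤ |K| * ‖u‖ := by
    intro h K hK t ht
    have h1 := hK _ (hmem t ht) _ hxmem
    rw [add_sub_cancel_left, norm_smul, Real.norm_eq_abs, abs_of_pos ht.1] at h1
    rw [abs_div, abs_of_pos ht.1, div_le_iff₀ ht.1]
    calc |h (xh + t • u) - h xh| ≤ K * (t * ‖u‖) := h1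
      _ ≤ |K| * (t * ‖u‖) := mul_le_mul_of_nonneg_right (le_abs_self K) (mul_nonneg ht.1.le (norm_nonneg u))
      _ = |K| * ‖u‖ * t := by ring
  rw [Metric.tendsto_atTop]
  intro ε hε
  set ε' : ℝ := ε / (2 * (‖u‖ + 1)) with hε'def
  have hε' : 0 < ε' := by positivity
  obtain ⟨N, hN⟩ := hsem ε' hε'
  refine ⟨N, fun n hn => ?_⟩
  obtain ⟨Kn, hKn⟩ := hlip n
  obtain ⟨Ki, hKi⟩ := hlipinf
  rw [Real.dist_eq]
  have key : |dini (f n) xh u - dini finf xh u| ≤ ε' * ‖u‖ := by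
    apply limsup_abs_sub_le (B := max (|Kn| * ‖u‖) (|Ki| * ‖u‖))
    · exact eventually_of_mem hIoo fun t ht =>
        (hquot (f n) Kn hKn t ht).trans (le_max_left _ _)
    · exact eventually_of_mem hIoo fun t ht =>
        (hquot finf Ki hKi t ht).trans (le_max_right _ _)
    · refine eventually_of_mem hIoo fun t ht => ?_
      have h1 := hN n hn _ (hmem t ht) _ hxmem
      rw [add_sub_cancel_left, norm_smul, Real.norm_eq_abs, abs_of_pos ht.1] at h1
      have : (f n (xh + t • u) - f n xh) / t - (finf (xh + t • u) - finf xh) / t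
          = ((f n (xh + t • u) - finf (xh + t • u)) - (f n xh - finf xh)) / t := by
        rw [div_sub_div_same]; congr 1; ring
      rw [this, abs_div, abs_of_pos ht.1, div_le_iff₀ ht.1]
      calc |f n (xh + t • u) - finf (xh + t • u) - (f n xh - finf xh)|
          ≤ ε' * (t * ‖u‖) := h1
        _ = ε' * ‖u‖ * t := by ring
  have hlt : ε' * ‖u‖ < ε := by
    have h1 : ε' * (‖u‖ + 1) = ε / 2 := by
      rw [hε'def, div_mul_eq_mul_div, div_eq_div_iff (by positivity) (by norm_num)]; ring
    nlinarith [norm_nonneg u]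
  exact key.trans_lt hlt
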